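/- (Finite-sample guarantee for the minimally adjusted p-value) Let (Ω, F, P) be a probability space, Θ a set, p : Θ → Ω → [0,1] a family of random variables, A : Ω → Set Θ a random set, and θ ∈ Θ the true parameter. Suppose that for every ω, the set P_A(ω) = { p(θ₀, ω) : θ₀ ∈ A(ω) } is nonempty, closed, and pathwise-connected, and let p_min(ω) be a point of P_A(ω) minimizing |p(𝟎, ω) − x| over x ∈ P_A(ω), where p(𝟎, ·) = p* is the unadjusted p-value. Then the event { θ ∈ A(·) } is contained in the event { |p_min − p(θ, ·)| ≤ |p* − p(θ, ·)| }, and consequently (assuming measurability) P( |p_min − p(θ, ·)| ≤ |p* − p(θ, ·)| ) ≥ P( θ ∈ A(·) ). -/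

import Mathlib

open MeasureTheory Set

/-- **Finite-sample guarantee for the minimally adjusted p-value.**
If for every `ω` the set of p-values `{p θ₀ ω : θ₀ ∈ A ω}` is nonempty, closed and
pathwise-connected, and `pmin ω` is a point of this set minimizing the distance to the
unadjusted p-value `p 0 ω`, then the event `{θ ∈ A}` is contained in the event
`{|pmin - p θ| ≤ |p 0 - p θ|}`, and hence
`P(|pmin - p θ| ≤ |p 0 - p θ|) ≥ P(θ ∈ A)`. -/
theorem minimally_adjusted_event_inclusion
    {Ω : Type*} [MeasurableSpace Ω] (P : Measure Ω) [IsProbabilityMeasure P]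
    {Θ : Type*} [Zero Θ] (p : Θ → Ω → ℝ) (hp01 : ∀ θ₀ ω, p θ₀ ω ∈ Icc (0 : ℝ) 1)
    (A : Ω → Set Θ) (θ : Θ)
    (hSne : ∀ ω, ((fun θ₀ => p θ₀ ω) '' A ω).Nonempty)
    (hSclosed : ∀ ω, IsClosed ((fun θ₀ => p θ₀ ω) '' A ω))
    (hSconn : ∀ ω, IsPathConnected ((fun θ₀ => p θ₀ ω) '' A ω))
    (pmin : Ω → ℝ)
    (hpminMem : ∀ ω, pmin ω ∈ (fun θ₀ => p θ₀ ω) '' A ω)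
    (hpminOpt : ∀ ω, ∀ x ∈ (fun θ₀ => p θ₀ ω) '' A ω,
      |p 0 ω - pmin ω| ≤ |p 0 ω - x|) :
    {ω | θ ∈ A ω} ⊆ {ω | |pmin ω - p θ ω| ≤ |p 0 ω - p θ ω|} ∧
      P {ω | θ ∈ A ω} ≤ P {ω | |pmin ω - p θ ω| ≤ |p 0 ω - p θ ω|} := by
  have hsub : {ω | θ ∈ A ω} ⊆ {ω | |pmin ω - p θ ω| ≤ |p 0 ω - p θ ω|} := by
    intro ω hω
    simp only [mem_setOf_eq] at hω ⊢
    set a := p 0 ω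
    set m := pmin ω
    set t := p θ ω
    have htS : t ∈ (fun θ₀ => p θ₀ ω) '' A ω := ⟨θ, hω, rfl⟩
    have hmt : |a - m| ≤ |a - t| := hpminOpt ω t htS
    have hord : OrdConnected ((fun θ₀ => p θ₀ ω) '' A ω) :=
      (hSconn ω).isConnected.isPreconnected.ordConnected
    by_cases hbet : min m t ≤ a ∧ a ≤ max m t
    · -- a lies between m and t, hence a ∈ S, so m = a
      have haS : a ∈ (fun θ₀ => p θ₀ ω) '' A ω := by
        rcases le_total m t with h | h
        · exact hord.out (hpminMem ω) htS ⟨by simpa [min_eq_left h] using hbet.1,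
            by simpa [max_eq_right h] using hbet.2⟩
        · exact hord.out htS (hpminMem ω) ⟨by simpa [min_eq_right h] using hbet.1,
            by simpa [max_eq_left h] using hbet.2⟩
      have h0 : |a - m| ≤ 0 := le_of_le_of_eq (hpminOpt ω a haS) (by simp [a])
      have : a = m := by
        have := abs_nonneg (a - m)
        have : |a - m| = 0 := le_antisymm h0 this
        have := abs_eq_zero.mp this
        linarith
      rw [← this]
    · -- a is outside [min m t, max m t]: m and t on same side of a
      push_neg at hbet
      rcases abs_cases (a - m) with ⟨e1, _⟩ | ⟨e1, _⟩ <;>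
        rcases abs_cases (a - t) with ⟨e2, _⟩ | ⟨e2, _⟩ <;>
        rcases abs_cases (m - t) with ⟨e3, _⟩ | ⟨e3, _⟩ <;>
        rcases le_total m t with hle | hle <;>
        simp only [min_eq_left hle, min_eq_right hle, max_eq_right hle, max_eq_left hle] at hbet <;>
        first
          | linarith [hbet (by linarith)]
          | linarith
  exact ⟨hsub, measure_mono hsub⟩
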